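/- arXiv:1902.06441 — 2 statements merged into one kernel-verified Lean document; each statement's English description precedes it below -/
import Mathlib

section
/- Let α ∈ (0,1), let n ≥ 4, let λ ∈ (0,∞)^p and μ ∈ (0,∞)^q be fixed bandwidths, and let B ≥ 1. Let Π_1,…,Π_B be i.i.d. random permutations of {1,…,n}, uniformly distributed on the symmetric group and independent of the sample Z_n = (X_i,Y_i)_{1≤i≤n}. For 1 ≤ b ≤ B set Ĥ^{⋆b} = ĤSIC_{λ,μ}((X_i, Y_{Π_b(i)})_{1≤i≤n}), set Ĥ^{⋆(B+1)} = ĤSIC_{λ,μ}(Z_n), and let q̂_{1−α}^{λ,μ} be the ⌈(B+1)(1−α)⌉-th smallest value among Ĥ^{⋆1},…,Ĥ^{⋆(B+1)}. Then, if the joint density of the sample factorizes as f = f_1 ⊗ f_2 (i.e., under the null hypothesis of independence), the probability that ĤSIC_{λ,μ}(Z_n) > q̂_{1−α}^{λ,μ} is at most α, for every B. -/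
open MeasureTheory ProbabilityTheory Real
open scoped BigOperators ENNReal NNReal

noncomputable section

/-- The standard Gaussian density on `ℝ^d`. -/
def gaussDensity (d : ℕ) (x : Fin d → ℝ) : ℝ :=
  (Real.sqrt (2 * π))⁻¹ ^ d * Real.exp (-(∑ i, (x i) ^ 2) / 2)

/-- The function `φ_λ` associated with a bandwidth vector `λ`. -/
def phiBW {d : ℕ} (lam : Fin d → ℝ) (x : Fin d → ℝ) : ℝ :=
  (∏ i, lam i)⁻¹ * gaussDensity d (fun i => x i / lam i)

/-- The Gaussian kernel with bandwidth `λ`. -/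
def gaussKernel {d : ℕ} (lam : Fin d → ℝ) (x x' : Fin d → ℝ) : ℝ :=
  phiBW lam (x - x')

/-- The HSIC estimator `ĤSIC_{λ,μ}` of a sample. -/
def HSICest (p q n : ℕ) (lam : Fin p → ℝ) (mu : Fin q → ℝ)
    (Z : Fin n → (Fin p → ℝ) × (Fin q → ℝ)) : ℝ :=
  ((n * (n-1) : ℕ) : ℝ)⁻¹ *
    ∑ i, ∑ j, (if i ≠ j then
      gaussKernel lam (Z i).1 (Z j).1 * gaussKernel mu (Z i).2 (Z j).2 else 0)
  + ((n * (n-1) * (n-2) * (n-3) : ℕ) : ℝ)⁻¹ *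
    ∑ i, ∑ j, ∑ r, ∑ s, (if i ≠ j ∧ i ≠ r ∧ i ≠ s ∧ j ≠ r ∧ j ≠ s ∧ r ≠ s then
      gaussKernel lam (Z i).1 (Z j).1 * gaussKernel mu (Z r).2 (Z s).2 else 0)
  - 2 * ((n * (n-1) * (n-2) : ℕ) : ℝ)⁻¹ *
    ∑ i, ∑ j, ∑ r, (if i ≠ j ∧ i ≠ r ∧ j ≠ r then
      gaussKernel lam (Z i).1 (Z j).1 * gaussKernel mu (Z j).2 (Z r).2 else 0)

/-- The measure with density `f` w.r.t. Lebesgue measure. -/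
def densMeasure {E : Type*} [MeasureSpace E] (f : E → ℝ) : Measure E :=
  volume.withDensity fun z => ENNReal.ofReal (f z)

/-- The law `P_f` of an i.i.d. `n`-sample with common density `f`. -/
def sampleLaw (n : ℕ) {E : Type*} [MeasureSpace E] (f : E → ℝ) : Measure (Fin n → E) :=
  Measure.pi fun _ => densMeasure f

/-- The `(1-a)`-quantile of `T` under `P`. -/
def quantile {Ω : Type*} [MeasurableSpace Ω] (P : Measure Ω) (T : Ω → ℝ) (a : ℝ) : ℝ :=
  sInf {t : ℝ | ENNReal.ofReal (1 - a) ≤ P {ω | T ω ≤ t}}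

/-- `f` is a joint probability density on `ℝ^p × ℝ^q` with marginals `f1` and `f2`. -/
structure IsJointDensity (p q : ℕ) (f : (Fin p → ℝ) × (Fin q → ℝ) → ℝ)
    (f1 : (Fin p → ℝ) → ℝ) (f2 : (Fin q → ℝ) → ℝ) : Prop where
  meas : Measurable f
  nonneg : ∀ z, 0 ≤ f z
  int_one : ∫ z, f z = 1
  marg1 : ∀ x, f1 x = ∫ y, f (x, y)
  marg2 : ∀ y, f2 y = ∫ x, f (x, y)

/-- The population HSIC `HSIC_{λ,μ}(f)`. -/
def HSICpop (p q : ℕ) (lam : Fin p → ℝ) (mu : Fin q → ℝ)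
    (f : (Fin p → ℝ) × (Fin q → ℝ) → ℝ) (f1 : (Fin p → ℝ) → ℝ) (f2 : (Fin q → ℝ) → ℝ) : ℝ :=
  (∫ z, ∫ z', gaussKernel lam z.1 z'.1 * gaussKernel mu z.2 z'.2 * (f z * f z'))
  + (∫ x, ∫ x', gaussKernel lam x x' * (f1 x * f1 x')) *
    (∫ y, ∫ y', gaussKernel mu y y' * (f2 y * f2 y'))
  - 2 * ∫ z, (∫ x', gaussKernel lam z.1 x' * f1 x') *
      (∫ y', gaussKernel mu z.2 y' * f2 y') * f z


/-- Discrete σ-algebra on the group of permutations of `Fin n`. -/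
instance instMSPerm (n : ℕ) : MeasurableSpace (Equiv.Perm (Fin n)) := ⊤

/-- The `k`-th smallest value (`1`-indexed) among `v 1, …, v m`. -/
def kthSmallest {m : ℕ} (v : Fin m → ℝ) (k : ℕ) : ℝ :=
  sInf {t : ℝ | k ≤ (Finset.univ.filter fun b => v b ≤ t).card}

namespace HSICaux

open Finset

variable {m k : ℕ} {v : Fin m → ℝ}

/-- Core structure lemma for `kthSmallest`. -/
lemma kth_core (hk1 : 1 ≤ k) (hk : k ≤ m) (v : Fin m → ℝ) :
    ∃ b0 : Fin m, kthSmallest v k = v b0 ∧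
      k ≤ (Finset.univ.filter fun c => v c ≤ v b0).card ∧
      ∀ t : ℝ, k ≤ (Finset.univ.filter fun c => v c ≤ t).card → v b0 ≤ t := by
  have hm : 0 < m := hk1.trans hk
  have hne : (Finset.univ : Finset (Fin m)).Nonempty := by
    simpa [Finset.univ_nonempty_iff] using Fin.pos_iff_nonempty.mp hm
  -- any t in the defining set dominates some "good" point
  have lb : ∀ t : ℝ, k ≤ (Finset.univ.filter fun c => v c ≤ t).card →
      ∃ b : Fin m, (k ≤ (Finset.univ.filter fun c => v c ≤ v b).card) ∧ v b ≤ t := by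
    intro t ht
    have hFne : (Finset.univ.filter fun c => v c ≤ t).Nonempty := by
      rw [← Finset.card_pos]; omega
    obtain ⟨b, hbmem, hbmax⟩ := Finset.exists_max_image _ v hFne
    have hbt : v b ≤ t := (Finset.mem_filter.mp hbmem).2
    refine ⟨b, le_trans ht (Finset.card_le_card ?_), hbt⟩
    intro c hc
    simp only [Finset.mem_filter, Finset.mem_univ, true_and] at hc ⊢
    exact hbmax c (by simp [Finset.mem_filter, hc])
  -- the "good" set is nonempty
  obtain ⟨b1, hb1, -⟩ := lb (Finset.univ.sup' hne v) (by
    have : (Finset.univ.filter fun c => v c ≤ Finset.univ.sup' hne v) = Finset.univ := by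
      ext c
      simp only [Finset.mem_filter, Finset.mem_univ, true_and, iff_true]
      exact Finset.le_sup' v (Finset.mem_univ c)
    rw [this, Finset.card_univ, Fintype.card_fin]; exact hk)
  -- minimize v over the good set
  obtain ⟨b0, hb0mem, hb0min⟩ := Finset.exists_min_image
    (Finset.univ.filter fun b => k ≤ (Finset.univ.filter fun c => v c ≤ v b).card) v
    ⟨b1, by simp [hb1]⟩
  have hb0 : k ≤ (Finset.univ.filter fun c => v c ≤ v b0).card :=
    (Finset.mem_filter.mp hb0mem).2
  have hlow : ∀ t : ℝ, k ≤ (Finset.univ.filter fun c => v c ≤ t).card → v b0 ≤ t := by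
    intro t ht
    obtain ⟨b, hbgood, hbt⟩ := lb t ht
    exact le_trans (hb0min b (by simp [hbgood])) hbt
  refine ⟨b0, le_antisymm (csInf_le ⟨v b0, fun t ht => hlow t ht⟩ hb0)
    (le_csInf ⟨v b0, hb0⟩ fun t ht => hlow t ht), hb0, hlow⟩

lemma kth_mem (hk1 : 1 ≤ k) (hk : k ≤ m) (v : Fin m → ℝ) :
    k ≤ (Finset.univ.filter fun c => v c ≤ kthSmallest v k).card := by
  obtain ⟨b0, h1, h2, -⟩ := kth_core hk1 hk v
  rw [h1]; exact h2

lemma kth_card_gt_le (hk1 : 1 ≤ k) (hk : k ≤ m) (v : Fin m → ℝ) :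
    (Finset.univ.filter fun c => kthSmallest v k < v c).card ≤ m - k := by
  have h := kth_mem hk1 hk v
  have hsplit := Finset.card_filter_add_card_filter_not
    (s := (Finset.univ : Finset (Fin m))) (p := fun c => v c ≤ kthSmallest v k)
  simp only [not_le, Finset.card_univ, Fintype.card_fin] at hsplit
  omega

lemma kth_lt_iff (hk1 : 1 ≤ k) (hk : k ≤ m) (v : Fin m → ℝ) (a : ℝ) :
    kthSmallest v k < a ↔
      ∃ b : Fin m, k ≤ (Finset.univ.filter fun c => v c ≤ v b).card ∧ v b < a := by
  obtain ⟨b0, h1, h2, h3⟩ := kth_core hk1 hk v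
  constructor
  · intro h; exact ⟨b0, h2, h1 ▸ h⟩
  · rintro ⟨b, hb, hba⟩
    rw [h1]; exact lt_of_le_of_lt (h3 _ hb) hba

lemma kth_comp_perm (τ : Equiv.Perm (Fin m)) (v : Fin m → ℝ) (k : ℕ) :
    kthSmallest (v ∘ τ) k = kthSmallest v k := by
  unfold kthSmallest
  congr 1
  ext t
  have : (Finset.univ.filter fun b => (v ∘ τ) b ≤ t).card
      = (Finset.univ.filter fun b => v b ≤ t).card :=
    Finset.card_equiv τ (by intro i; simp)
  simp only [Set.mem_setOf_eq, this]

end HSICaux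

namespace HSICaux

lemma measurable_gaussKernel {d : ℕ} (lam : Fin d → ℝ) {α : Type*} [MeasurableSpace α]
    {f g : α → Fin d → ℝ} (hf : Measurable f) (hg : Measurable g) :
    Measurable (fun a => gaussKernel lam (f a) (g a)) := by
  unfold gaussKernel phiBW gaussDensity
  have h1 : Measurable (fun a =>
      ∑ i, ((f a - g a) i / lam i) ^ 2) := by
    refine Finset.measurable_sum _ fun i _ => ?_
    simp only [Pi.sub_apply]
    exact (((hf.eval.sub hg.eval).div_const _)).pow_const 2
  exact (((Real.measurable_exp.comp ((h1.neg).div_const 2)).const_mul _).const_mul _)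

lemma measurable_HSICest (p q n : ℕ) (lam : Fin p → ℝ) (mu : Fin q → ℝ) :
    Measurable (HSICest p q n lam mu) := by
  have hk : ∀ (i j : Fin n), Measurable (fun Z : Fin n → (Fin p → ℝ) × (Fin q → ℝ) =>
      gaussKernel lam (Z i).1 (Z j).1) := fun i j =>
    measurable_gaussKernel lam ((measurable_pi_apply i).fst) ((measurable_pi_apply j).fst)
  have hl : ∀ (i j : Fin n), Measurable (fun Z : Fin n → (Fin p → ℝ) × (Fin q → ℝ) =>
      gaussKernel mu (Z i).2 (Z j).2) := fun i j =>
    measurable_gaussKernel mu ((measurable_pi_apply i).snd) ((measurable_pi_apply j).snd)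
  unfold HSICest
  refine Measurable.sub (Measurable.add ?_ ?_) ?_
  · refine Measurable.const_mul ?_ _
    refine Finset.measurable_sum _ fun i _ => Finset.measurable_sum _ fun j _ => ?_
    by_cases h : i ≠ j
    · simpa [h, Pi.mul_def] using (hk i j).mul (hl i j)
    · simpa [h] using measurable_const
  · refine Measurable.const_mul ?_ _
    refine Finset.measurable_sum _ fun i _ => Finset.measurable_sum _ fun j _ =>
      Finset.measurable_sum _ fun r _ => Finset.measurable_sum _ fun s _ => ?_
    by_cases h : i ≠ j ∧ i ≠ r ∧ i ≠ s ∧ j ≠ r ∧ j ≠ s ∧ r ≠ s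
    · simpa [h, Pi.mul_def] using (hk i j).mul (hl r s)
    · simpa [h] using measurable_const
  · refine Measurable.const_mul ?_ _
    refine Finset.measurable_sum _ fun i _ => Finset.measurable_sum _ fun j _ =>
      Finset.measurable_sum _ fun r _ => ?_
    by_cases h : i ≠ j ∧ i ≠ r ∧ j ≠ r
    · simpa [h, Pi.mul_def] using (hk i j).mul (hl j r)
    · simpa [h] using measurable_const

/-- The permuted sample `(Xᵢ, Y_{σ(i)})ᵢ`. -/
def pSample {p q n : ℕ} (σ : Equiv.Perm (Fin n))
    (z : Fin n → (Fin p → ℝ) × (Fin q → ℝ)) : Fin n → (Fin p → ℝ) × (Fin q → ℝ) :=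
  fun i => ((z i).1, (z (σ i)).2)

lemma pSample_one {p q n : ℕ} (z : Fin n → (Fin p → ℝ) × (Fin q → ℝ)) :
    pSample 1 z = z := by
  funext i; simp [pSample]

lemma pSample_comp {p q n : ℕ} (σ ρ : Equiv.Perm (Fin n))
    (z : Fin n → (Fin p → ℝ) × (Fin q → ℝ)) :
    pSample ρ (pSample σ z) = pSample (σ * ρ) z := by
  funext i; simp [pSample, Equiv.Perm.mul_apply]

lemma measurable_pSample {p q n : ℕ} (σ : Equiv.Perm (Fin n)) :
    Measurable (pSample (p := p) (q := q) σ) := by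
  refine measurable_pi_lambda _ fun i => Measurable.prodMk ?_ ?_
  · exact (measurable_pi_apply i).fst
  · exact (measurable_pi_apply (σ i)).snd

/-- The vector of permuted HSIC statistics. -/
def wVec (p q n : ℕ) (lam : Fin p → ℝ) (mu : Fin q → ℝ) {m : ℕ}
    (ρ : Fin m → Equiv.Perm (Fin n)) (z : Fin n → (Fin p → ℝ) × (Fin q → ℝ))
    (b : Fin m) : ℝ :=
  HSICest p q n lam mu (pSample (ρ b) z)

lemma wVec_pSample (p q n : ℕ) (lam : Fin p → ℝ) (mu : Fin q → ℝ) {m : ℕ}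
    (ρ : Fin m → Equiv.Perm (Fin n)) (σ : Equiv.Perm (Fin n))
    (z : Fin n → (Fin p → ℝ) × (Fin q → ℝ)) :
    wVec p q n lam mu ρ (pSample σ z) = wVec p q n lam mu (fun b => σ * ρ b) z := by
  funext b; simp [wVec, pSample_comp]

lemma measurable_wVec (p q n : ℕ) (lam : Fin p → ℝ) (mu : Fin q → ℝ) {m : ℕ}
    (ρ : Fin m → Equiv.Perm (Fin n)) (b : Fin m) :
    Measurable (fun z => wVec p q n lam mu ρ z b) :=
  (measurable_HSICest p q n lam mu).comp (measurable_pSample (ρ b))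

/-- The event set in the sample space. -/
def Aset (p q n : ℕ) (lam : Fin p → ℝ) (mu : Fin q → ℝ) {m : ℕ} (k : ℕ)
    (ρ : Fin m → Equiv.Perm (Fin n)) (c : Fin m) :
    Set (Fin n → (Fin p → ℝ) × (Fin q → ℝ)) :=
  {z | kthSmallest (wVec p q n lam mu ρ z) k < wVec p q n lam mu ρ z c}

lemma measurableSet_Aset (p q n : ℕ) (lam : Fin p → ℝ) (mu : Fin q → ℝ) {m : ℕ}
    {k : ℕ} (hk1 : 1 ≤ k) (hk : k ≤ m)
    (ρ : Fin m → Equiv.Perm (Fin n)) (c : Fin m) :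
    MeasurableSet (Aset p q n lam mu k ρ c) := by
  have hA : Aset p q n lam mu k ρ c = ⋃ b : Fin m,
      ({z | k ≤ (Finset.univ.filter fun c' =>
          wVec p q n lam mu ρ z c' ≤ wVec p q n lam mu ρ z b).card}
        ∩ {z | wVec p q n lam mu ρ z b < wVec p q n lam mu ρ z c}) := by
    ext z
    simp only [Aset, Set.mem_setOf_eq, Set.mem_iUnion, Set.mem_inter_iff]
    exact kth_lt_iff hk1 hk _ _
  rw [hA]
  refine MeasurableSet.iUnion fun b => MeasurableSet.inter ?_ ?_
  · have hcard : Measurable (fun z => (Finset.univ.filter fun c' =>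
        wVec p q n lam mu ρ z c' ≤ wVec p q n lam mu ρ z b).card) := by
      simp only [Finset.card_filter]
      refine Finset.measurable_sum _ fun c' _ => ?_
      exact Measurable.ite
        (measurableSet_le (measurable_wVec p q n lam mu ρ c') (measurable_wVec p q n lam mu ρ b))
        measurable_const measurable_const
    exact hcard (measurableSet_Ici (a := k))
  · exact measurableSet_lt (measurable_wVec p q n lam mu ρ b) (measurable_wVec p q n lam mu ρ c)

/-- Extension of a `B`-tuple of permutations by the identity in the last slot. -/
def extPerm {n B : ℕ} (pp : Fin B → Equiv.Perm (Fin n)) (b : Fin (B+1)) :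
    Equiv.Perm (Fin n) :=
  if h : (b:ℕ) < B then pp ⟨b, h⟩ else 1

lemma extPerm_last {n B : ℕ} (pp : Fin B → Equiv.Perm (Fin n)) :
    extPerm pp (Fin.last B) = 1 := by
  simp [extPerm]

lemma extPerm_lt {n B : ℕ} (pp : Fin B → Equiv.Perm (Fin n)) {b : Fin (B+1)}
    (h : (b:ℕ) < B) : extPerm pp b = pp ⟨b, h⟩ := dif_pos h

lemma mem_Aset_iff (p q n : ℕ) (lam : Fin p → ℝ) (mu : Fin q → ℝ) {m : ℕ} (k : ℕ)
    (ρ : Fin m → Equiv.Perm (Fin n)) (c : Fin m) (z : Fin n → (Fin p → ℝ) × (Fin q → ℝ)) :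
    z ∈ Aset p q n lam mu k ρ c ↔
      kthSmallest (wVec p q n lam mu ρ z) k < wVec p q n lam mu ρ z c := Iff.rfl

lemma pSample_preimage_Aset (p q n : ℕ) (lam : Fin p → ℝ) (mu : Fin q → ℝ) {m : ℕ}
    (k : ℕ) (ρ : Fin m → Equiv.Perm (Fin n)) (σ : Equiv.Perm (Fin n)) (c : Fin m) :
    pSample σ ⁻¹' (Aset p q n lam mu k ρ c) = Aset p q n lam mu k (fun b => σ * ρ b) c := by
  ext z
  simp only [Set.mem_preimage, Aset, Set.mem_setOf_eq, wVec_pSample]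

lemma Aset_comp_perm (p q n : ℕ) (lam : Fin p → ℝ) (mu : Fin q → ℝ) {m : ℕ}
    (k : ℕ) (ρ : Fin m → Equiv.Perm (Fin n)) (τ : Equiv.Perm (Fin m)) (c : Fin m) :
    Aset p q n lam mu k (ρ ∘ τ) c = Aset p q n lam mu k ρ (τ c) := by
  have hw : ∀ z, wVec p q n lam mu (ρ ∘ τ) z = (wVec p q n lam mu ρ z) ∘ τ := fun z => rfl
  ext z
  simp only [Aset, Set.mem_setOf_eq, hw, kth_comp_perm, Function.comp_apply]

end HSICaux

namespace HSICaux

variable {p q : ℕ} {f1 : (Fin p → ℝ) → ℝ} {f2 : (Fin q → ℝ) → ℝ}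

lemma prob_densMeasure (hd : IsJointDensity p q (fun z => f1 z.1 * f2 z.2) f1 f2) :
    IsProbabilityMeasure (densMeasure (fun z : (Fin p → ℝ) × (Fin q → ℝ) => f1 z.1 * f2 z.2)) := by
  have hint : Integrable (fun z : (Fin p → ℝ) × (Fin q → ℝ) => f1 z.1 * f2 z.2) := by
    by_contra h
    have := hd.int_one
    rw [MeasureTheory.integral_undef h] at this
    norm_num at this
  constructor
  rw [densMeasure, withDensity_apply _ MeasurableSet.univ, Measure.restrict_univ,
    ← MeasureTheory.ofReal_integral_eq_lintegral_ofReal hint (Filter.Eventually.of_forall hd.nonneg),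
    hd.int_one]
  simp

lemma measurable_f1 (hd : IsJointDensity p q (fun z => f1 z.1 * f2 z.2) f1 f2) :
    Measurable f1 := by
  have hne : ∃ y0, f2 y0 ≠ 0 := by
    by_contra h
    push_neg at h
    have : (fun z : (Fin p → ℝ) × (Fin q → ℝ) => f1 z.1 * f2 z.2) = fun _ => (0:ℝ) := by
      funext z; rw [h z.2, mul_zero]
    have h1 := hd.int_one
    rw [this] at h1
    simp at h1
  obtain ⟨y0, hy0⟩ := hne
  have : f1 = fun x => (f1 x * f2 y0) * (f2 y0)⁻¹ := by
    funext x; field_simp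
  rw [this]
  exact (hd.meas.comp (measurable_id.prodMk measurable_const)).mul_const _

lemma measurable_f2 (hd : IsJointDensity p q (fun z => f1 z.1 * f2 z.2) f1 f2) :
    Measurable f2 := by
  have hne : ∃ x0, f1 x0 ≠ 0 := by
    by_contra h
    push_neg at h
    have : (fun z : (Fin p → ℝ) × (Fin q → ℝ) => f1 z.1 * f2 z.2) = fun _ => (0:ℝ) := by
      funext z; rw [h z.1, zero_mul]
    have h1 := hd.int_one
    rw [this] at h1
    simp at h1
  obtain ⟨x0, hx0⟩ := hne
  have : f2 = fun y => (f1 x0 * f2 y) * (f1 x0)⁻¹ := by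
    funext y; field_simp
  rw [this]
  exact (hd.meas.comp (measurable_const.prodMk measurable_id)).mul_const _

lemma densMeasure_rect (hd : IsJointDensity p q (fun z => f1 z.1 * f2 z.2) f1 f2)
    {t : Set (Fin p → ℝ)} {u : Set (Fin q → ℝ)}
    (ht : MeasurableSet t) (hu : MeasurableSet u) :
    densMeasure (fun z : (Fin p → ℝ) × (Fin q → ℝ) => f1 z.1 * f2 z.2) (t ×ˢ u)
      = (volume.withDensity fun x => ENNReal.ofReal |f1 x|) t
        * (volume.withDensity fun y => ENNReal.ofReal |f2 y|) u := by
  rw [densMeasure, withDensity_apply _ (ht.prod hu), withDensity_apply _ ht,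
    withDensity_apply _ hu]
  have hrw : ∀ z : (Fin p → ℝ) × (Fin q → ℝ),
      ENNReal.ofReal (f1 z.1 * f2 z.2) = ENNReal.ofReal |f1 z.1| * ENNReal.ofReal |f2 z.2| := by
    intro z
    rw [← ENNReal.ofReal_mul (abs_nonneg _), ← abs_mul, abs_of_nonneg (hd.nonneg z)]
  rw [lintegral_congr hrw]
  rw [MeasureTheory.Measure.volume_eq_prod, ← Measure.prod_restrict]
  exact MeasureTheory.lintegral_prod_mul
    ((measurable_f1 hd).abs.ennreal_ofReal.aemeasurable)
    ((measurable_f2 hd).abs.ennreal_ofReal.aemeasurable)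

end HSICaux

namespace HSICaux

variable {n : ℕ}

lemma measurePreserving_pSample
    (hd : IsJointDensity p q (fun z => f1 z.1 * f2 z.2) f1 f2) (σ : Equiv.Perm (Fin n)) :
    MeasurePreserving (pSample (p := p) (q := q) σ)
      (sampleLaw n (fun z => f1 z.1 * f2 z.2)) (sampleLaw n (fun z => f1 z.1 * f2 z.2)) := by
  haveI hprob : IsProbabilityMeasure
      (densMeasure (fun z : (Fin p → ℝ) × (Fin q → ℝ) => f1 z.1 * f2 z.2)) :=
    prob_densMeasure hd
  set ν := densMeasure (fun z : (Fin p → ℝ) × (Fin q → ℝ) => f1 z.1 * f2 z.2) with hν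
  set C : Set (Set ((Fin p → ℝ) × (Fin q → ℝ))) :=
    Set.image2 (· ×ˢ ·) {s | MeasurableSet s} {t | MeasurableSet t} with hC
  have h3C : ν.FiniteSpanningSetsIn C :=
    { set := fun _ => Set.univ ×ˢ Set.univ
      set_mem := fun _ => ⟨Set.univ, by simp, Set.univ, by simp, rfl⟩
      finite := fun _ => by rw [Set.univ_prod_univ]; exact measure_lt_top ν _
      spanning := by rw [Set.iUnion_const, Set.univ_prod_univ] }
  refine ⟨measurable_pSample σ, ?_⟩
  refine (Measure.pi_eq_generateFrom (C := fun _ => C)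
    (fun _ => generateFrom_prod) (fun _ => isPiSystem_prod) (fun _ => h3C) ?_).symm
  intro s hs
  have hmem := fun i => hs i
  choose t ht u hu hst using hmem
  simp only [Set.mem_setOf_eq] at ht hu
  have hst' : ∀ i, t i ×ˢ u i = s i := hst
  have hsmeas : ∀ i, MeasurableSet (s i) := fun i => by
    rw [← hst' i]; exact (ht i).prod (hu i)
  rw [Measure.map_apply (measurable_pSample σ) (MeasurableSet.univ_pi hsmeas)]
  have hpre : pSample (p := p) (q := q) σ ⁻¹' (Set.univ.pi s)
      = Set.univ.pi (fun i => t i ×ˢ u (σ⁻¹ i)) := by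
    ext z
    simp only [Set.mem_preimage, Set.mem_pi, Set.mem_univ, true_implies]
    have hmem' : ∀ i, (pSample σ z i ∈ s i) ↔ ((z i).1 ∈ t i ∧ (z (σ i)).2 ∈ u i) := by
      intro i; rw [← hst' i]; rfl
    simp only [hmem', Set.mem_prod]
    constructor
    · intro h i
      refine ⟨(h i).1, ?_⟩
      have := (h (σ⁻¹ i)).2
      rwa [← Equiv.Perm.mul_apply, mul_inv_cancel, Equiv.Perm.one_apply] at this
    · intro h i
      refine ⟨(h i).1, ?_⟩
      have := (h (σ i)).2
      rwa [← Equiv.Perm.mul_apply, inv_mul_cancel, Equiv.Perm.one_apply] at this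
  rw [hpre,
    show (sampleLaw n fun z => f1 z.1 * f2 z.2) = Measure.pi (fun _ : Fin n => ν) from rfl,
    Measure.pi_pi]
  calc ∏ i, ν (t i ×ˢ u (σ⁻¹ i))
      = ∏ i, ((volume.withDensity fun x => ENNReal.ofReal |f1 x|) (t i)
          * (volume.withDensity fun y => ENNReal.ofReal |f2 y|) (u (σ⁻¹ i))) :=
        Finset.prod_congr rfl fun i _ => densMeasure_rect hd (ht i) (hu (σ⁻¹ i))
    _ = (∏ i, (volume.withDensity fun x => ENNReal.ofReal |f1 x|) (t i))
          * ∏ i, (volume.withDensity fun y => ENNReal.ofReal |f2 y|) (u (σ⁻¹ i)) :=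
        Finset.prod_mul_distrib
    _ = (∏ i, (volume.withDensity fun x => ENNReal.ofReal |f1 x|) (t i))
          * ∏ i, (volume.withDensity fun y => ENNReal.ofReal |f2 y|) (u i) := by
        rw [Equiv.prod_comp (σ⁻¹ : Equiv.Perm (Fin n))
          (fun i => (volume.withDensity fun y => ENNReal.ofReal |f2 y|) (u i))]
    _ = ∏ i, ((volume.withDensity fun x => ENNReal.ofReal |f1 x|) (t i)
          * (volume.withDensity fun y => ENNReal.ofReal |f2 y|) (u i)) :=
        Finset.prod_mul_distrib.symm
    _ = ∏ i, ν (s i) := Finset.prod_congr rfl fun i _ => by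
        rw [← densMeasure_rect hd (ht i) (hu i), hst' i]

end HSICaux

set_option maxHeartbeats 2000000 in

/-- Proposition 1 of the paper: the permuted HSIC test with Monte Carlo
approximation is of non-asymptotic level `α` under the null hypothesis `f = f_1 ⊗ f_2`,
for every number `B` of permutations. -/
theorem stmt0 (p q n : ℕ) (hp : 0 < p) (hq : 0 < q) (hn : 4 ≤ n) (B : ℕ) (hB : 1 ≤ B)
    (lam : Fin p → ℝ) (mu : Fin q → ℝ) (hlam : ∀ i, 0 < lam i) (hmu : ∀ j, 0 < mu j)
    (α : ℝ) (hα : α ∈ Set.Ioo (0:ℝ) 1)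
    (f1 : (Fin p → ℝ) → ℝ) (f2 : (Fin q → ℝ) → ℝ)
    (hd : IsJointDensity p q (fun z => f1 z.1 * f2 z.2) f1 f2)
    {Ω : Type*} [MeasurableSpace Ω] (P : Measure Ω) [IsProbabilityMeasure P]
    -- the observed sample, an i.i.d. `n`-sample with common density `f = f_1 ⊗ f_2`
    (Z : Ω → Fin n → (Fin p → ℝ) × (Fin q → ℝ)) (hZmeas : Measurable Z)
    (hZlaw : P.map Z = sampleLaw n (fun z => f1 z.1 * f2 z.2))
    -- `B` i.i.d. uniform random permutations, independent of the sample
    (Perm : Fin B → Ω → Equiv.Perm (Fin n)) (hPmeas : ∀ b, Measurable (Perm b))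
    (hPermIid : iIndepFun Perm P)
    (hPermLaw : ∀ (b : Fin B) (σ : Equiv.Perm (Fin n)),
      P {ω | Perm b ω = σ} = (((Nat.factorial n : ℕ) : ℝ≥0∞))⁻¹)
    (hIndep : IndepFun (fun ω b => Perm b ω) Z P) :
    P {ω |
        kthSmallest (fun b : Fin (B + 1) =>
          if h : (b : ℕ) < B then
            -- the permuted statistics `Ĥ^{⋆b}`
            HSICest p q n lam mu (fun i => ((Z ω i).1, (Z ω ((Perm ⟨b, h⟩ ω) i)).2))
          else
            -- the original statistic `Ĥ^{⋆(B+1)}`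
            HSICest p q n lam mu (Z ω))
          (Nat.ceil (((B : ℝ) + 1) * (1 - α)))
        < HSICest p q n lam mu (Z ω)}
      ≤ ENNReal.ofReal α := by
  classical
  obtain ⟨hα0, hα1⟩ := hα
  set Q : Measure (Fin n → (Fin p → ℝ) × (Fin q → ℝ)) :=
    sampleLaw n (fun z => f1 z.1 * f2 z.2) with hQdef
  haveI hνprob : IsProbabilityMeasure
      (densMeasure (fun z : (Fin p → ℝ) × (Fin q → ℝ) => f1 z.1 * f2 z.2)) :=
    HSICaux.prob_densMeasure hd
  haveI hQprob : IsProbabilityMeasure Q := by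
    rw [hQdef, sampleLaw]; infer_instance
  set k : ℕ := Nat.ceil (((B:ℝ)+1) * (1-α)) with hkdef
  have hk1 : 1 ≤ k := by
    rw [hkdef, Nat.one_le_ceil_iff]
    have h1 : (0:ℝ) < (B:ℝ)+1 := by positivity
    nlinarith
  have hkm : k ≤ B + 1 := by
    rw [hkdef]
    refine Nat.ceil_le.mpr ?_
    push_cast
    nlinarith
  have hAmeas : ∀ (pp : Fin B → Equiv.Perm (Fin n)) (c : Fin (B+1)),
      MeasurableSet (HSICaux.Aset p q n lam mu k (HSICaux.extPerm pp) c) := fun pp c =>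
    HSICaux.measurableSet_Aset p q n lam mu hk1 hkm _ c
  -- identification of the event
  have hvec : ∀ ω, (fun b : Fin (B+1) =>
      if h : (b:ℕ) < B then
        HSICest p q n lam mu (fun i => ((Z ω i).1, (Z ω ((Perm ⟨b, h⟩ ω) i)).2))
      else HSICest p q n lam mu (Z ω))
      = HSICaux.wVec p q n lam mu (HSICaux.extPerm (fun b => Perm b ω)) (Z ω) := by
    intro ω
    funext b
    by_cases h : (b:ℕ) < B
    · rw [dif_pos h, HSICaux.wVec, HSICaux.extPerm_lt _ h]
      rfl
    · rw [dif_neg h, HSICaux.wVec, HSICaux.extPerm, dif_neg h, HSICaux.pSample_one]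
  have hlast : ∀ ω, HSICaux.wVec p q n lam mu (HSICaux.extPerm (fun b => Perm b ω)) (Z ω)
      (Fin.last B) = HSICest p q n lam mu (Z ω) := by
    intro ω
    rw [HSICaux.wVec, HSICaux.extPerm_last, HSICaux.pSample_one]
  have hev1 : {ω |
        kthSmallest (fun b : Fin (B + 1) =>
          if h : (b : ℕ) < B then
            HSICest p q n lam mu (fun i => ((Z ω i).1, (Z ω ((Perm ⟨b, h⟩ ω) i)).2))
          else
            HSICest p q n lam mu (Z ω))
          (Nat.ceil (((B : ℝ) + 1) * (1 - α)))
        < HSICest p q n lam mu (Z ω)}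
      = {ω | Z ω ∈ HSICaux.Aset p q n lam mu k
          (HSICaux.extPerm (fun b => Perm b ω)) (Fin.last B)} := by
    ext ω
    rw [Set.mem_setOf_eq, Set.mem_setOf_eq, hvec ω, ← hkdef,
      HSICaux.mem_Aset_iff, hlast ω]
  rw [hev1]
  -- decomposition over the permutation values
  have hdecomp : {ω | Z ω ∈ HSICaux.Aset p q n lam mu k
          (HSICaux.extPerm (fun b => Perm b ω)) (Fin.last B)}
      = ⋃ pp : Fin B → Equiv.Perm (Fin n),
          ((⋂ b, Perm b ⁻¹' {pp b}) ∩
            Z ⁻¹' (HSICaux.Aset p q n lam mu k (HSICaux.extPerm pp) (Fin.last B))) := by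
    ext ω
    simp only [Set.mem_setOf_eq, Set.mem_iUnion, Set.mem_inter_iff, Set.mem_iInter,
      Set.mem_preimage, Set.mem_singleton_iff]
    constructor
    · intro h
      exact ⟨fun b => Perm b ω, fun b => rfl, h⟩
    · rintro ⟨pp, hpp, h⟩
      have hfe : (fun b => Perm b ω) = pp := funext hpp
      rwa [hfe]
  have hmeasπ : ∀ pp : Fin B → Equiv.Perm (Fin n),
      MeasurableSet ((⋂ b, Perm b ⁻¹' {pp b}) ∩
        Z ⁻¹' (HSICaux.Aset p q n lam mu k (HSICaux.extPerm pp) (Fin.last B))) := fun pp =>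
    (MeasurableSet.iInter fun b => (hPmeas b) MeasurableSpace.measurableSet_top).inter
      (hZmeas (hAmeas pp _))
  have hdisj : Pairwise (Function.onFun Disjoint fun pp : Fin B → Equiv.Perm (Fin n) =>
      ((⋂ b, Perm b ⁻¹' {pp b}) ∩
        Z ⁻¹' (HSICaux.Aset p q n lam mu k (HSICaux.extPerm pp) (Fin.last B)))) := by
    intro pp pp' hne
    refine Set.disjoint_left.mpr ?_
    rintro ω ⟨h1, -⟩ ⟨h2, -⟩
    apply hne
    funext b
    have hb1 := Set.mem_iInter.mp h1 b
    have hb2 := Set.mem_iInter.mp h2 b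
    simp only [Set.mem_preimage, Set.mem_singleton_iff] at hb1 hb2
    rw [← hb1, ← hb2]
  -- the probability of each piece
  have hpiece : ∀ pp : Fin B → Equiv.Perm (Fin n),
      P ((⋂ b, Perm b ⁻¹' {pp b}) ∩
          Z ⁻¹' (HSICaux.Aset p q n lam mu k (HSICaux.extPerm pp) (Fin.last B)))
        = ((n.factorial : ℝ≥0∞)⁻¹) ^ B
            * Q (HSICaux.Aset p q n lam mu k (HSICaux.extPerm pp) (Fin.last B)) := by
    intro pp
    have hWpre : (⋂ b, Perm b ⁻¹' {pp b}) = (fun ω b => Perm b ω) ⁻¹' {pp} := by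
      ext ω
      simp only [Set.mem_iInter, Set.mem_preimage, Set.mem_singleton_iff, funext_iff]
    have hsing : MeasurableSet ({pp} : Set (Fin B → Equiv.Perm (Fin n))) := by
      have hrw : ({pp} : Set (Fin B → Equiv.Perm (Fin n)))
          = ⋂ b, (fun g : Fin B → Equiv.Perm (Fin n) => g b) ⁻¹' {pp b} := by
        ext g
        simp only [Set.mem_singleton_iff, Set.mem_iInter, Set.mem_preimage,
          Set.mem_singleton_iff, funext_iff]
      rw [hrw]
      exact MeasurableSet.iInter fun b =>
        (measurable_pi_apply b) MeasurableSpace.measurableSet_top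
    rw [hWpre, hIndep.measure_inter_preimage_eq_mul _ _ hsing (hAmeas pp _)]
    congr 1
    · -- P (W ⁻¹' {pp}) = (n!)⁻¹ ^ B
      rw [← hWpre,
        hPermIid.meas_iInter (fun b => ⟨{pp b}, MeasurableSpace.measurableSet_top, rfl⟩)]
      have hone : ∀ b : Fin B, P (Perm b ⁻¹' {pp b}) = ((n.factorial : ℝ≥0∞))⁻¹ := by
        intro b
        have hpre : Perm b ⁻¹' {pp b} = {ω | Perm b ω = pp b} := by
          ext ω; simp [Set.mem_preimage]
        rw [hpre, hPermLaw b (pp b)]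
      rw [Finset.prod_congr rfl fun b _ => hone b, Finset.prod_const, Finset.card_univ,
        Fintype.card_fin]
    · -- P (Z ⁻¹' A) = Q A
      rw [← Measure.map_apply hZmeas (hAmeas pp _), hZlaw]
  -- key symmetry lemma
  have key : ∀ c : Fin (B+1),
      ∑ pp : Fin B → Equiv.Perm (Fin n),
          Q (HSICaux.Aset p q n lam mu k (HSICaux.extPerm pp) (Fin.last B))
        = ∑ pp : Fin B → Equiv.Perm (Fin n),
            Q (HSICaux.Aset p q n lam mu k (HSICaux.extPerm pp) c) := by
    intro c
    by_cases hc : c = Fin.last B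
    · rw [hc]
    · have hcB : (c:ℕ) < B := Fin.val_lt_last hc
      set c' : Fin B := ⟨c, hcB⟩ with hc'
      set η : (Fin B → Equiv.Perm (Fin n)) → (Fin B → Equiv.Perm (Fin n)) :=
        fun pp b => if b = c' then (pp c')⁻¹ else (pp c')⁻¹ * pp b with hη
      have hηc' : ∀ pp, η pp c' = (pp c')⁻¹ := by
        intro pp; simp [hη]
      have hηne : ∀ pp b, b ≠ c' → η pp b = (pp c')⁻¹ * pp b := by
        intro pp b hb; simp [hη, hb]
      have hinv : Function.Involutive η := by
        intro pp
        funext b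
        by_cases hb : b = c'
        · rw [hb, hηc' (η pp), hηc' pp, inv_inv]
        · rw [hηne (η pp) b hb, hηne pp b hb, hηc' pp, inv_inv, ← mul_assoc,
            mul_inv_cancel, one_mul]
      have hper : ∀ pp : Fin B → Equiv.Perm (Fin n),
          Q (HSICaux.Aset p q n lam mu k (HSICaux.extPerm pp) c)
            = Q (HSICaux.Aset p q n lam mu k (HSICaux.extPerm (η pp)) (Fin.last B)) := by
        intro pp
        set σ : Equiv.Perm (Fin n) := (pp c')⁻¹ with hσ
        have h1 : Q (HSICaux.Aset p q n lam mu k (HSICaux.extPerm pp) c)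
            = Q (HSICaux.pSample σ ⁻¹'
                (HSICaux.Aset p q n lam mu k (HSICaux.extPerm pp) c)) :=
          ((HSICaux.measurePreserving_pSample hd σ).measure_preimage
            (hAmeas pp c).nullMeasurableSet).symm
        have h2 : HSICaux.pSample (p := p) (q := q) σ ⁻¹'
              (HSICaux.Aset p q n lam mu k (HSICaux.extPerm pp) c)
            = HSICaux.Aset p q n lam mu k (fun b => σ * HSICaux.extPerm pp b) c :=
          HSICaux.pSample_preimage_Aset p q n lam mu k (HSICaux.extPerm pp) σ c
        set τ : Equiv.Perm (Fin (B+1)) := Equiv.swap c (Fin.last B) with hτ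
        have h3 : HSICaux.Aset p q n lam mu k (fun b => σ * HSICaux.extPerm pp b) c
            = HSICaux.Aset p q n lam mu k
                ((fun b => σ * HSICaux.extPerm pp b) ∘ τ) (Fin.last B) := by
          rw [HSICaux.Aset_comp_perm]
          congr 1
          rw [hτ, Equiv.swap_apply_right]
        have h4 : (fun b => σ * HSICaux.extPerm pp b) ∘ τ = HSICaux.extPerm (η pp) := by
          funext b
          simp only [Function.comp_apply]
          by_cases hbl : b = Fin.last B
          · -- τ b = c
            rw [hbl, hτ, Equiv.swap_apply_right, HSICaux.extPerm_last,
              HSICaux.extPerm_lt _ hcB, hσ, ← hc', inv_mul_cancel]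
          · by_cases hbc : b = c
            · -- τ b = last
              rw [hbc, hτ, Equiv.swap_apply_left, HSICaux.extPerm_last, mul_one,
                HSICaux.extPerm_lt _ hcB, ← hc', hηc' pp, hσ]
            · have hτb : τ b = b := by
                rw [hτ, Equiv.swap_apply_of_ne_of_ne hbc hbl]
              rw [hτb]
              have hbB : (b:ℕ) < B := Fin.val_lt_last hbl
              have hbne : (⟨b, hbB⟩ : Fin B) ≠ c' := by
                intro hcontra
                apply hbc
                rw [hc'] at hcontra
                have hval : (b:ℕ) = (c:ℕ) := by
                  have := congrArg Fin.val hcontra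
                  simpa using this
                exact Fin.ext hval
              rw [HSICaux.extPerm_lt _ hbB, HSICaux.extPerm_lt _ hbB,
                hηne pp _ hbne, hσ]
        rw [h1, h2, h3, h4]
      calc ∑ pp : Fin B → Equiv.Perm (Fin n),
            Q (HSICaux.Aset p q n lam mu k (HSICaux.extPerm pp) (Fin.last B))
          = ∑ pp : Fin B → Equiv.Perm (Fin n),
              Q (HSICaux.Aset p q n lam mu k (HSICaux.extPerm (hinv.toPerm η pp))
                (Fin.last B)) :=
            (Equiv.sum_comp (hinv.toPerm η) fun pp =>
              Q (HSICaux.Aset p q n lam mu k (HSICaux.extPerm pp) (Fin.last B))).symm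
        _ = ∑ pp : Fin B → Equiv.Perm (Fin n),
              Q (HSICaux.Aset p q n lam mu k (HSICaux.extPerm pp) c) := by
            refine Finset.sum_congr rfl fun pp _ => ?_
            rw [show hinv.toPerm η pp = η pp from rfl, ← hper pp]
  -- counting bound
  have hcount : ∀ pp : Fin B → Equiv.Perm (Fin n),
      ∑ c : Fin (B+1), Q (HSICaux.Aset p q n lam mu k (HSICaux.extPerm pp) c)
        ≤ ((B + 1 - k : ℕ) : ℝ≥0∞) := by
    intro pp
    have hptw : ∀ z, ∑ c : Fin (B+1),
        (HSICaux.Aset p q n lam mu k (HSICaux.extPerm pp) c).indicator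
          (1 : (Fin n → (Fin p → ℝ) × (Fin q → ℝ)) → ℝ≥0∞) z
        ≤ ((B + 1 - k : ℕ) : ℝ≥0∞) := by
      intro z
      have hcard : (Finset.univ.filter fun c : Fin (B+1) =>
          z ∈ HSICaux.Aset p q n lam mu k (HSICaux.extPerm pp) c).card ≤ B + 1 - k :=
        HSICaux.kth_card_gt_le hk1 hkm
          (HSICaux.wVec p q n lam mu (HSICaux.extPerm pp) z)
      calc ∑ c : Fin (B+1),
            (HSICaux.Aset p q n lam mu k (HSICaux.extPerm pp) c).indicator
              (1 : (Fin n → (Fin p → ℝ) × (Fin q → ℝ)) → ℝ≥0∞) z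
          = ∑ c : Fin (B+1), if z ∈ HSICaux.Aset p q n lam mu k (HSICaux.extPerm pp) c
              then (1:ℝ≥0∞) else 0 := by
            refine Finset.sum_congr rfl fun c _ => ?_
            rw [Set.indicator_apply]
            simp only [Pi.one_apply]
        _ = ((Finset.univ.filter fun c : Fin (B+1) =>
              z ∈ HSICaux.Aset p q n lam mu k (HSICaux.extPerm pp) c).card : ℝ≥0∞) := by
            rw [Finset.card_filter]
            push_cast
            rfl
        _ ≤ ((B + 1 - k : ℕ) : ℝ≥0∞) := Nat.cast_le.mpr hcard
    calc ∑ c : Fin (B+1), Q (HSICaux.Aset p q n lam mu k (HSICaux.extPerm pp) c)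
        = ∑ c : Fin (B+1), ∫⁻ z,
            (HSICaux.Aset p q n lam mu k (HSICaux.extPerm pp) c).indicator
              (1 : (Fin n → (Fin p → ℝ) × (Fin q → ℝ)) → ℝ≥0∞) z ∂Q := by
          refine Finset.sum_congr rfl fun c _ => ?_
          rw [lintegral_indicator_one (hAmeas pp c)]
      _ = ∫⁻ z, ∑ c : Fin (B+1),
            (HSICaux.Aset p q n lam mu k (HSICaux.extPerm pp) c).indicator
              (1 : (Fin n → (Fin p → ℝ) × (Fin q → ℝ)) → ℝ≥0∞) z ∂Q :=
          (lintegral_finset_sum _ fun c _ => measurable_one.indicator (hAmeas pp c)).symm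
      _ ≤ ∫⁻ _, ((B + 1 - k : ℕ) : ℝ≥0∞) ∂Q := lintegral_mono hptw
      _ = ((B + 1 - k : ℕ) : ℝ≥0∞) := by
          rw [lintegral_const, measure_univ, mul_one]
  -- assemble
  have hPE : P {ω | Z ω ∈ HSICaux.Aset p q n lam mu k
        (HSICaux.extPerm (fun b => Perm b ω)) (Fin.last B)}
      = ((n.factorial : ℝ≥0∞)⁻¹) ^ B
        * ∑ pp : Fin B → Equiv.Perm (Fin n),
            Q (HSICaux.Aset p q n lam mu k (HSICaux.extPerm pp) (Fin.last B)) := by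
    rw [hdecomp, measure_iUnion hdisj hmeasπ, tsum_fintype, Finset.mul_sum]
    exact Finset.sum_congr rfl fun pp _ => hpiece pp
  have hmain : ((B:ℝ≥0∞) + 1) * P {ω | Z ω ∈ HSICaux.Aset p q n lam mu k
        (HSICaux.extPerm (fun b => Perm b ω)) (Fin.last B)}
      ≤ ((B + 1 - k : ℕ) : ℝ≥0∞) := by
    have hswap : ((B:ℝ≥0∞) + 1) * P {ω | Z ω ∈ HSICaux.Aset p q n lam mu k
          (HSICaux.extPerm (fun b => Perm b ω)) (Fin.last B)}
        = ∑ pp : Fin B → Equiv.Perm (Fin n), ((n.factorial : ℝ≥0∞)⁻¹) ^ B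
            * ∑ c : Fin (B+1), Q (HSICaux.Aset p q n lam mu k (HSICaux.extPerm pp) c) := by
      calc ((B:ℝ≥0∞) + 1) * P {ω | Z ω ∈ HSICaux.Aset p q n lam mu k
            (HSICaux.extPerm (fun b => Perm b ω)) (Fin.last B)}
          = ∑ _c : Fin (B+1), P {ω | Z ω ∈ HSICaux.Aset p q n lam mu k
              (HSICaux.extPerm (fun b => Perm b ω)) (Fin.last B)} := by
            rw [Finset.sum_const, Finset.card_univ, Fintype.card_fin, nsmul_eq_mul]
            push_cast
            ring
        _ = ∑ c : Fin (B+1), ((n.factorial : ℝ≥0∞)⁻¹) ^ B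
              * ∑ pp : Fin B → Equiv.Perm (Fin n),
                  Q (HSICaux.Aset p q n lam mu k (HSICaux.extPerm pp) c) := by
            refine Finset.sum_congr rfl fun c _ => ?_
            rw [hPE, key c]
        _ = ∑ pp : Fin B → Equiv.Perm (Fin n), ((n.factorial : ℝ≥0∞)⁻¹) ^ B
              * ∑ c : Fin (B+1), Q (HSICaux.Aset p q n lam mu k (HSICaux.extPerm pp) c) := by
            simp_rw [Finset.mul_sum]
            rw [Finset.sum_comm]
    rw [hswap]
    calc ∑ pp : Fin B → Equiv.Perm (Fin n), ((n.factorial : ℝ≥0∞)⁻¹) ^ B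
            * ∑ c : Fin (B+1), Q (HSICaux.Aset p q n lam mu k (HSICaux.extPerm pp) c)
        ≤ ∑ _pp : Fin B → Equiv.Perm (Fin n),
            ((n.factorial : ℝ≥0∞)⁻¹) ^ B * ((B + 1 - k : ℕ) : ℝ≥0∞) :=
          Finset.sum_le_sum fun pp _ => mul_le_mul_right (hcount pp) _
      _ = ((B + 1 - k : ℕ) : ℝ≥0∞) := by
          simp only [Finset.sum_const, Finset.card_univ, Fintype.card_fun,
            Fintype.card_perm, Fintype.card_fin, nsmul_eq_mul]
          rw [← mul_assoc]
          push_cast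
          rw [← mul_pow, ENNReal.mul_inv_cancel (by exact_mod_cast n.factorial_ne_zero)
            (ENNReal.natCast_ne_top _), one_pow, one_mul]
  -- conclude
  have hfinal : ((B + 1 - k : ℕ) : ℝ≥0∞) ≤ ((B:ℝ≥0∞) + 1) * ENNReal.ofReal α := by
    have hreal : ((B + 1 - k : ℕ) : ℝ) ≤ ((B:ℝ) + 1) * α := by
      have hceil : ((B:ℝ)+1) * (1-α) ≤ k := Nat.le_ceil _
      have hsub : ((B + 1 - k : ℕ) : ℝ) = ((B:ℝ) + 1) - k := by
        rw [Nat.cast_sub hkm]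
        push_cast
        ring
      rw [hsub]
      nlinarith
    calc ((B + 1 - k : ℕ) : ℝ≥0∞) = ENNReal.ofReal ((B + 1 - k : ℕ) : ℝ) :=
          (ENNReal.ofReal_natCast _).symm
      _ ≤ ENNReal.ofReal (((B:ℝ) + 1) * α) := ENNReal.ofReal_le_ofReal hreal
      _ = ENNReal.ofReal ((B:ℝ) + 1) * ENNReal.ofReal α :=
          ENNReal.ofReal_mul (by positivity)
      _ = ((B:ℝ≥0∞) + 1) * ENNReal.ofReal α := by
          rw [show ((B:ℝ) + 1) = ((B + 1 : ℕ) : ℝ) by push_cast; ring,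
            ENNReal.ofReal_natCast]
          push_cast
          ring
  have hne0 : ((B:ℝ≥0∞) + 1) ≠ 0 := by simp
  have hnetop : ((B:ℝ≥0∞) + 1) ≠ ⊤ := by
    simp [ENNReal.add_ne_top, ENNReal.natCast_ne_top]
  exact (ENNReal.mul_le_mul_iff_right hne0 hnetop).mp (hmain.trans hfinal)
end
end

section
/- Set ψ = f − f_1⊗f_2. Then HSIC_{λ,μ}(f) = ⟨ψ, ψ ∗ (φ_λ ⊗ φ_μ)⟩_{L²(ℝ^{p+q})}, where ∗ denotes convolution and φ_λ ⊗ φ_μ(x,y) = φ_λ(x)φ_μ(y); consequently, HSIC_{λ,μ}(f) = (1/2)·(‖ψ‖_2² + ‖ψ ∗ (φ_λ ⊗ φ_μ)‖_2² − ‖ψ − ψ ∗ (φ_λ ⊗ φ_μ)‖_2²). -/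
open MeasureTheory ProbabilityTheory Real
open scoped BigOperators ENNReal NNReal

noncomputable section

/-- The convolution `ψ ∗ (φ_λ ⊗ φ_μ)` on `ℝ^p × ℝ^q`. -/
def convPair (p q : ℕ) (psi : (Fin p → ℝ) × (Fin q → ℝ) → ℝ)
    (lam : Fin p → ℝ) (mu : Fin q → ℝ) (z : (Fin p → ℝ) × (Fin q → ℝ)) : ℝ :=
  ∫ w, psi w * (phiBW lam (z.1 - w.1) * phiBW mu (z.2 - w.2))

-- 1-dim kernel
def phi1 (c : ℝ) (t : ℝ) : ℝ := c⁻¹ * ((Real.sqrt (2 * π))⁻¹ * Real.exp (-(t / c) ^ 2 / 2))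

lemma phi1_int (c : ℝ) (hc : 0 < c) : Integrable (phi1 c) volume := by
  have h : ∀ t : ℝ, -(t / c) ^ 2 / 2 = -((2 * c ^ 2)⁻¹) * t ^ 2 := by
    intro t; field_simp
  unfold phi1
  simp_rw [h]
  exact ((integrable_exp_neg_mul_sq (by positivity)).const_mul _).const_mul _

lemma phi1_integral (c : ℝ) (hc : 0 < c) : ∫ t, phi1 c t = 1 := by
  have h : ∀ t : ℝ, -(t / c) ^ 2 / 2 = -((2 * c ^ 2)⁻¹) * t ^ 2 := by
    intro t; field_simp
  unfold phi1
  simp_rw [h, integral_const_mul, integral_gaussian]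
  rw [show π / (2 * c ^ 2)⁻¹ = (2 * π) * c ^ 2 by field_simp]
  rw [Real.sqrt_mul (by positivity : (0:ℝ) ≤ 2 * π), Real.sqrt_sq hc.le]
  rw [Real.sqrt_mul (by norm_num : (0:ℝ) ≤ 2)]
  field_simp

lemma phiBW_eq_prod {d : ℕ} (lam : Fin d → ℝ) (x : Fin d → ℝ) :
    phiBW lam x = ∏ i, phi1 (lam i) (x i) := by
  unfold phiBW gaussDensity phi1
  rw [Finset.prod_mul_distrib, Finset.prod_mul_distrib, Finset.prod_const,
    ← Finset.prod_inv_distrib, ← Real.exp_sum]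
  simp only [Finset.card_univ, Fintype.card_fin]
  congr 2
  rw [← Finset.sum_div, ← Finset.sum_neg_distrib]

lemma phiBW_int {d : ℕ} (lam : Fin d → ℝ) (hlam : ∀ i, 0 < lam i) :
    Integrable (phiBW lam) volume := by
  have h : phiBW lam = fun x => ∏ i, phi1 (lam i) (x i) := funext (phiBW_eq_prod lam)
  rw [h]
  exact Integrable.fintype_prod (𝕜 := ℝ) (f := fun i : Fin d => phi1 (lam i))
    (fun i => phi1_int _ (hlam i))

lemma phiBW_integral {d : ℕ} (lam : Fin d → ℝ) (hlam : ∀ i, 0 < lam i) :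
    ∫ x, phiBW lam x = 1 := by
  simp_rw [phiBW_eq_prod]
  rw [MeasureTheory.integral_fintype_prod_volume_eq_prod (f := fun i : Fin d => phi1 (lam i))]
  simp [phi1_integral _ (hlam _)]

lemma phiBW_nonneg {d : ℕ} (lam : Fin d → ℝ) (hlam : ∀ i, 0 < lam i) (x : Fin d → ℝ) :
    0 ≤ phiBW lam x := by
  rw [phiBW_eq_prod]
  refine Finset.prod_nonneg fun i _ => ?_
  unfold phi1
  have := (hlam i).le
  positivity

lemma phiBW_le {d : ℕ} (lam : Fin d → ℝ) (hlam : ∀ i, 0 < lam i) (x : Fin d → ℝ) :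
    phiBW lam x ≤ (∏ i, lam i)⁻¹ * (Real.sqrt (2 * π))⁻¹ ^ d := by
  unfold phiBW gaussDensity
  have h1 : Real.exp (-(∑ i, (x i / lam i) ^ 2) / 2) ≤ 1 := by
    rw [Real.exp_le_one_iff]
    have : 0 ≤ ∑ i, (x i / lam i) ^ 2 := Finset.sum_nonneg fun i _ => sq_nonneg _
    linarith
  have h2 : (0:ℝ) ≤ (∏ i, lam i)⁻¹ := by
    have : (0:ℝ) < ∏ i, lam i := Finset.prod_pos fun i _ => hlam i
    positivity
  calc (∏ i, lam i)⁻¹ * ((Real.sqrt (2*π))⁻¹ ^ d * Real.exp (-(∑ i, (x i / lam i) ^ 2) / 2))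
      ≤ (∏ i, lam i)⁻¹ * ((Real.sqrt (2*π))⁻¹ ^ d * 1) := by
        gcongr
      _ = (∏ i, lam i)⁻¹ * (Real.sqrt (2*π))⁻¹ ^ d := by ring

lemma phiBW_cont {d : ℕ} (lam : Fin d → ℝ) : Continuous (phiBW lam) := by
  unfold phiBW gaussDensity
  fun_prop

section PhiP

variable {p q : ℕ} (lam : Fin p → ℝ) (mu : Fin q → ℝ)

def PhiP (lam : Fin p → ℝ) (mu : Fin q → ℝ) (z : (Fin p → ℝ) × (Fin q → ℝ)) : ℝ :=
  phiBW lam z.1 * phiBW mu z.2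

variable (hlam : ∀ i, 0 < lam i) (hmu : ∀ j, 0 < mu j)

lemma PhiP_cont : Continuous (PhiP lam mu) :=
  ((phiBW_cont lam).comp continuous_fst).mul ((phiBW_cont mu).comp continuous_snd)

include hlam hmu

lemma PhiP_nonneg (z : (Fin p → ℝ) × (Fin q → ℝ)) : 0 ≤ PhiP lam mu z :=
  mul_nonneg (phiBW_nonneg lam hlam _) (phiBW_nonneg mu hmu _)

lemma PhiP_int : Integrable (PhiP lam mu) volume := by
  rw [show (volume : Measure ((Fin p → ℝ) × (Fin q → ℝ))) = volume.prod volume from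
    Measure.volume_eq_prod _ _]
  exact (phiBW_int lam hlam).mul_prod (phiBW_int mu hmu)

lemma PhiP_integral : ∫ z, PhiP lam mu z = 1 := by
  rw [show (volume : Measure ((Fin p → ℝ) × (Fin q → ℝ))) = volume.prod volume from
    Measure.volume_eq_prod _ _]
  unfold PhiP
  rw [MeasureTheory.integral_prod_mul (f := phiBW lam) (g := phiBW mu)]
  rw [phiBW_integral lam hlam, phiBW_integral mu hmu]; norm_num

omit hlam hmu

lemma phiBW_neg {d : ℕ} (l : Fin d → ℝ) (x : Fin d → ℝ) : phiBW l (-x) = phiBW l x := by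
  unfold phiBW gaussDensity
  simp [neg_div]

lemma PhiP_sub_comm (z w : (Fin p → ℝ) × (Fin q → ℝ)) :
    PhiP lam mu (z - w) = PhiP lam mu (w - z) := by
  unfold PhiP
  rw [Prod.fst_sub, Prod.snd_sub, Prod.fst_sub, Prod.snd_sub,
    show w.1 - z.1 = -(z.1 - w.1) by abel, show w.2 - z.2 = -(z.2 - w.2) by abel,
    phiBW_neg, phiBW_neg]

instance instRI (p q : ℕ) :
    (volume : Measure ((Fin p → ℝ) × (Fin q → ℝ))).IsAddRightInvariant := by
  rw [show (volume : Measure ((Fin p → ℝ) × (Fin q → ℝ))) = volume.prod volume from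
    Measure.volume_eq_prod _ _]
  infer_instance

include hlam hmu

lemma PhiP_int_shift (w : (Fin p → ℝ) × (Fin q → ℝ)) :
    Integrable (fun z => PhiP lam mu (z - w)) volume :=
  (PhiP_int lam mu hlam hmu).comp_sub_right w

lemma PhiP_int_shift' (z : (Fin p → ℝ) × (Fin q → ℝ)) :
    Integrable (fun w => PhiP lam mu (z - w)) volume := by
  have h : (fun w => PhiP lam mu (z - w)) = fun w => PhiP lam mu (w - z) :=
    funext fun w => PhiP_sub_comm lam mu z w
  rw [h]
  exact PhiP_int_shift lam mu hlam hmu z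

lemma PhiP_integral_shift (w : (Fin p → ℝ) × (Fin q → ℝ)) :
    ∫ z, PhiP lam mu (z - w) = 1 := by
  rw [integral_sub_right_eq_self (PhiP lam mu) w]
  exact PhiP_integral lam mu hlam hmu

lemma PhiP_integral_shift' (z : (Fin p → ℝ) × (Fin q → ℝ)) :
    ∫ w, PhiP lam mu (z - w) = 1 := by
  have h : (fun w => PhiP lam mu (z - w)) = fun w => PhiP lam mu (w - z) :=
    funext fun w => PhiP_sub_comm lam mu z w
  rw [h]
  exact PhiP_integral_shift lam mu hlam hmu z

end PhiP

section Key

variable {p q : ℕ} {lam : Fin p → ℝ} {mu : Fin q → ℝ}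

lemma split_mul (G1 : (Fin p → ℝ) → ℝ) (G2 : (Fin q → ℝ) → ℝ) :
    ∫ z : (Fin p → ℝ) × (Fin q → ℝ), G1 z.1 * G2 z.2 = (∫ x, G1 x) * (∫ y, G2 y) := by
  rw [Measure.volume_eq_prod]
  exact MeasureTheory.integral_prod_mul G1 G2

variable (hlam : ∀ i, 0 < lam i) (hmu : ∀ j, 0 < mu j)

include hlam hmu

lemma key_int {g h : (Fin p → ℝ) × (Fin q → ℝ) → ℝ} (hgm : Measurable g) (hhm : Measurable h)
    (hhi : Integrable h volume) {Bg : ℝ} (hgb : ∀ z, |g z| ≤ Bg) :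
    Integrable (fun zw => g zw.1 * h zw.2 * PhiP lam mu (zw.1 - zw.2))
      ((volume : Measure ((Fin p → ℝ) × (Fin q → ℝ))).prod volume) := by
  have hBg : 0 ≤ Bg := le_trans (abs_nonneg _) (hgb 0)
  have hFm : Measurable (fun zw : ((Fin p → ℝ) × (Fin q → ℝ)) × (Fin p → ℝ) × (Fin q → ℝ) =>
      g zw.1 * h zw.2 * PhiP lam mu (zw.1 - zw.2)) :=
    ((hgm.comp measurable_fst).mul (hhm.comp measurable_snd)).mul
      ((PhiP_cont lam mu).measurable.comp (measurable_fst.sub measurable_snd))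
  have hbnd : ∀ w z, ‖g z * h w * PhiP lam mu (z - w)‖ ≤
      ‖Bg * |h w| * PhiP lam mu (z - w)‖ := by
    intro w z
    rw [Real.norm_eq_abs, Real.norm_eq_abs, abs_mul, abs_mul, abs_mul, abs_mul,
      abs_abs, abs_of_nonneg hBg,
      abs_of_nonneg (PhiP_nonneg lam mu hlam hmu _)]
    exact mul_le_mul_of_nonneg_right (mul_le_mul_of_nonneg_right (hgb z) (abs_nonneg _))
      (PhiP_nonneg lam mu hlam hmu _)
  have hslice : ∀ w, Integrable (fun z => g z * h w * PhiP lam mu (z - w)) volume := by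
    intro w
    have hdom : Integrable (fun z : (Fin p → ℝ) × (Fin q → ℝ) =>
        Bg * |h w| * PhiP lam mu (z - w)) volume :=
      (PhiP_int_shift lam mu hlam hmu w).const_mul _
    exact hdom.mono
      (((hgm.mul measurable_const).mul
        ((PhiP_cont lam mu).measurable.comp (measurable_sub_const w))).aestronglyMeasurable)
      (Filter.Eventually.of_forall (hbnd w))
  rw [integrable_prod_iff' hFm.aestronglyMeasurable]
  refine ⟨Filter.Eventually.of_forall hslice, ?_⟩
  have hdom2 : Integrable (fun w : (Fin p → ℝ) × (Fin q → ℝ) => Bg * |h w|) volume :=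
    hhi.abs.const_mul Bg
  refine hdom2.mono (hFm.norm.stronglyMeasurable.integral_prod_left').aestronglyMeasurable ?_
  refine Filter.Eventually.of_forall fun w => ?_
  have h1 : ∫ z, ‖g z * h w * PhiP lam mu (z - w)‖ ≤
      ∫ z, Bg * |h w| * PhiP lam mu (z - w) := by
    refine integral_mono (hslice w).norm
      ((PhiP_int_shift lam mu hlam hmu w).const_mul _) fun z => ?_
    calc ‖g z * h w * PhiP lam mu (z - w)‖
        ≤ ‖Bg * |h w| * PhiP lam mu (z - w)‖ := hbnd w z
      _ = Bg * |h w| * PhiP lam mu (z - w) := by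
          rw [Real.norm_eq_abs]
          exact abs_of_nonneg (mul_nonneg (mul_nonneg hBg (abs_nonneg _))
            (PhiP_nonneg lam mu hlam hmu _))
  have h2 : ∫ z, Bg * |h w| * PhiP lam mu (z - w) = Bg * |h w| := by
    rw [MeasureTheory.integral_const_mul, PhiP_integral_shift lam mu hlam hmu w, mul_one]
  rw [Real.norm_eq_abs (Bg * |h w|), abs_of_nonneg (by positivity), Real.norm_eq_abs,
    abs_of_nonneg (integral_nonneg fun z => norm_nonneg _)]
  rw [h2] at h1
  exact h1

lemma key_eq {g h : (Fin p → ℝ) × (Fin q → ℝ) → ℝ} (hgm : Measurable g) (hhm : Measurable h)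
    (hhi : Integrable h volume) {Bg : ℝ} (hgb : ∀ z, |g z| ≤ Bg) :
    ∫ zw, g zw.1 * h zw.2 * PhiP lam mu (zw.1 - zw.2)
      ∂((volume : Measure ((Fin p → ℝ) × (Fin q → ℝ))).prod volume) =
    ∫ z, g z * ∫ w, h w * PhiP lam mu (z - w) := by
  rw [MeasureTheory.integral_prod _ (key_int hlam hmu hgm hhm hhi hgb)]
  congr 1
  funext z
  simp_rw [mul_assoc]
  exact MeasureTheory.integral_const_mul _ _

omit hlam hmu

lemma key_swap (g h : (Fin p → ℝ) × (Fin q → ℝ) → ℝ) :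
    ∫ zw, g zw.1 * h zw.2 * PhiP lam mu (zw.1 - zw.2)
      ∂((volume : Measure ((Fin p → ℝ) × (Fin q → ℝ))).prod volume) =
    ∫ zw, h zw.1 * g zw.2 * PhiP lam mu (zw.1 - zw.2)
      ∂((volume : Measure ((Fin p → ℝ) × (Fin q → ℝ))).prod volume) := by
  rw [← MeasureTheory.integral_prod_swap
    (fun zw : ((Fin p → ℝ) × (Fin q → ℝ)) × (Fin p → ℝ) × (Fin q → ℝ) =>
      g zw.1 * h zw.2 * PhiP lam mu (zw.1 - zw.2))]
  congr 1
  funext zw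
  simp only [Prod.fst_swap, Prod.snd_swap]
  rw [PhiP_sub_comm]
  ring

end Key

/-- Lemma 2 of the paper: with `ψ = f − f_1⊗f_2`,
`HSIC_{λ,μ}(f) = ⟨ψ, ψ ∗ (φ_λ ⊗ φ_μ)⟩₂`, and consequently
`HSIC_{λ,μ}(f) = ½(‖ψ‖₂² + ‖ψ ∗ (φ_λ ⊗ φ_μ)‖₂² − ‖ψ − ψ ∗ (φ_λ ⊗ φ_μ)‖₂²)`. -/
theorem stmt5 (p q : ℕ) (hp : 0 < p) (hq : 0 < q)
    (lam : Fin p → ℝ) (mu : Fin q → ℝ) (hlam : ∀ i, 0 < lam i) (hmu : ∀ j, 0 < mu j)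
    (f : (Fin p → ℝ) × (Fin q → ℝ) → ℝ) (f1 : (Fin p → ℝ) → ℝ) (f2 : (Fin q → ℝ) → ℝ)
    (hf : IsJointDensity p q f f1 f2) (M : ℝ)
    (hfb : ∀ z, f z ≤ M) (hf1b : ∀ x, f1 x ≤ M) (hf2b : ∀ y, f2 y ≤ M)
    (hpsiL2 : MeasureTheory.Integrable
      (fun z => (f z - f1 z.1 * f2 z.2) ^ 2) volume) :
    HSICpop p q lam mu f f1 f2 =
      ∫ z, (f z - f1 z.1 * f2 z.2) *
        convPair p q (fun w => f w - f1 w.1 * f2 w.2) lam mu z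
    ∧
    HSICpop p q lam mu f f1 f2 =
      (1/2) * ((∫ z, (f z - f1 z.1 * f2 z.2) ^ 2)
        + (∫ z, (convPair p q (fun w => f w - f1 w.1 * f2 w.2) lam mu z) ^ 2)
        - (∫ z, ((f z - f1 z.1 * f2 z.2)
            - convPair p q (fun w => f w - f1 w.1 * f2 w.2) lam mu z) ^ 2)) := by
  -- Basic facts
  have hfm : Measurable f := hf.meas
  have hM0 : 0 ≤ M := le_trans (hf.nonneg 0) (hfb 0)
  have hfi : Integrable f volume := by
    by_contra h
    have h1 := hf.int_one
    rw [MeasureTheory.integral_undef h] at h1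
    norm_num at h1
  have hfi' : Integrable f (volume.prod volume) := by
    rwa [Measure.volume_eq_prod _ _] at hfi
  have hf1eq : f1 = fun x => ∫ y, f (x, y) := funext hf.marg1
  have hf2eq : f2 = fun y => ∫ x, f (x, y) := funext hf.marg2
  have hf1m : Measurable f1 := by
    rw [hf1eq]; exact hfm.stronglyMeasurable.integral_prod_right'.measurable
  have hf2m : Measurable f2 := by
    rw [hf2eq]; exact hfm.stronglyMeasurable.integral_prod_left'.measurable
  have hf1i : Integrable f1 volume := by rw [hf1eq]; exact hfi'.integral_prod_left
  have hf2i : Integrable f2 volume := by rw [hf2eq]; exact hfi'.integral_prod_right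
  have hf1nn : ∀ x, 0 ≤ f1 x := fun x => by
    rw [hf.marg1]; exact integral_nonneg fun y => hf.nonneg _
  have hf2nn : ∀ y, 0 ≤ f2 y := fun y => by
    rw [hf.marg2]; exact integral_nonneg fun x => hf.nonneg _
  have hum : Measurable (fun z : (Fin p → ℝ) × (Fin q → ℝ) => f1 z.1 * f2 z.2) :=
    (hf1m.comp measurable_fst).mul (hf2m.comp measurable_snd)
  have hui : Integrable (fun z : (Fin p → ℝ) × (Fin q → ℝ) => f1 z.1 * f2 z.2) volume := by
    rw [Measure.volume_eq_prod _ _]; exact hf1i.mul_prod hf2i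
  have hpm : Measurable (fun z : (Fin p → ℝ) × (Fin q → ℝ) => f z - f1 z.1 * f2 z.2) :=
    hfm.sub hum
  have hpi : Integrable (fun z : (Fin p → ℝ) × (Fin q → ℝ) => f z - f1 z.1 * f2 z.2) volume :=
    hfi.sub hui
  have hfB : ∀ z, |f z| ≤ M := fun z => by
    rw [abs_of_nonneg (hf.nonneg z)]; exact hfb z
  have huB : ∀ z : (Fin p → ℝ) × (Fin q → ℝ), |f1 z.1 * f2 z.2| ≤ M * M := fun z => by
    rw [abs_of_nonneg (mul_nonneg (hf1nn _) (hf2nn _))]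
    exact mul_le_mul (hf1b _) (hf2b _) (hf2nn _) hM0
  have hpB : ∀ z : (Fin p → ℝ) × (Fin q → ℝ), |f z - f1 z.1 * f2 z.2| ≤ M + M * M := fun z => by
    calc |f z - f1 z.1 * f2 z.2| = |f z + -(f1 z.1 * f2 z.2)| := by rw [sub_eq_add_neg]
      _ ≤ |f z| + |-(f1 z.1 * f2 z.2)| := abs_add_le _ _
      _ = |f z| + |f1 z.1 * f2 z.2| := by rw [abs_neg]
      _ ≤ M + M * M := add_le_add (hfB z) (huB z)
  -- the four double-integral integrabilities
  have hIff := key_int hlam hmu hfm hfm hfi hfB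
  have hIfu := key_int hlam hmu hfm hum hui hfB
  have hIuf := key_int hlam hmu hum hfm hfi huB
  have hIuu := key_int hlam hmu hum hum hui huB
  -- Identification of the three HSIC terms
  have hJff : (∫ zw, f zw.1 * f zw.2 * PhiP lam mu (zw.1 - zw.2)
      ∂((volume : Measure ((Fin p → ℝ) × (Fin q → ℝ))).prod volume))
      = ∫ z, ∫ z', gaussKernel lam z.1 z'.1 * gaussKernel mu z.2 z'.2 * (f z * f z') := by
    rw [MeasureTheory.integral_prod _ hIff]
    congr 1; funext z; congr 1; funext z'
    show f z * f z' * (phiBW lam (z.1 - z'.1) * phiBW mu (z.2 - z'.2))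
      = phiBW lam (z.1 - z'.1) * phiBW mu (z.2 - z'.2) * (f z * f z')
    ring
  have hJfu : (∫ zw, f zw.1 * (f1 zw.2.1 * f2 zw.2.2) * PhiP lam mu (zw.1 - zw.2)
      ∂((volume : Measure ((Fin p → ℝ) × (Fin q → ℝ))).prod volume))
      = ∫ z, (∫ x', gaussKernel lam z.1 x' * f1 x') *
          (∫ y', gaussKernel mu z.2 y' * f2 y') * f z := by
    rw [key_eq hlam hmu hfm hum hui hfB]
    congr 1; funext z
    have hinner : (∫ w : (Fin p → ℝ) × (Fin q → ℝ), f1 w.1 * f2 w.2 * PhiP lam mu (z - w))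
        = (∫ x', f1 x' * phiBW lam (z.1 - x')) * (∫ y', f2 y' * phiBW mu (z.2 - y')) := by
      rw [← split_mul (fun x' => f1 x' * phiBW lam (z.1 - x'))
        (fun y' => f2 y' * phiBW mu (z.2 - y'))]
      congr 1; funext w
      show f1 w.1 * f2 w.2 * (phiBW lam (z.1 - w.1) * phiBW mu (z.2 - w.2))
        = f1 w.1 * phiBW lam (z.1 - w.1) * (f2 w.2 * phiBW mu (z.2 - w.2))
      ring
    rw [hinner]
    have e1 : (∫ x', gaussKernel lam z.1 x' * f1 x') = ∫ x', f1 x' * phiBW lam (z.1 - x') := by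
      congr 1; funext x'
      show phiBW lam (z.1 - x') * f1 x' = f1 x' * phiBW lam (z.1 - x')
      ring
    have e2 : (∫ y', gaussKernel mu z.2 y' * f2 y') = ∫ y', f2 y' * phiBW mu (z.2 - y') := by
      congr 1; funext y'
      show phiBW mu (z.2 - y') * f2 y' = f2 y' * phiBW mu (z.2 - y')
      ring
    rw [e1, e2]; ring
  have hJuu : (∫ zw, (f1 zw.1.1 * f2 zw.1.2) * (f1 zw.2.1 * f2 zw.2.2) *
        PhiP lam mu (zw.1 - zw.2)
      ∂((volume : Measure ((Fin p → ℝ) × (Fin q → ℝ))).prod volume))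
      = (∫ x, ∫ x', gaussKernel lam x x' * (f1 x * f1 x')) *
        (∫ y, ∫ y', gaussKernel mu y y' * (f2 y * f2 y')) := by
    rw [key_eq hlam hmu hum hum hui huB]
    have hinner : ∀ z : (Fin p → ℝ) × (Fin q → ℝ),
        (∫ w : (Fin p → ℝ) × (Fin q → ℝ), f1 w.1 * f2 w.2 * PhiP lam mu (z - w))
        = (∫ x', f1 x' * phiBW lam (z.1 - x')) * (∫ y', f2 y' * phiBW mu (z.2 - y')) := by
      intro z
      rw [← split_mul (fun x' => f1 x' * phiBW lam (z.1 - x'))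
        (fun y' => f2 y' * phiBW mu (z.2 - y'))]
      congr 1; funext w
      show f1 w.1 * f2 w.2 * (phiBW lam (z.1 - w.1) * phiBW mu (z.2 - w.2))
        = f1 w.1 * phiBW lam (z.1 - w.1) * (f2 w.2 * phiBW mu (z.2 - w.2))
      ring
    have hstep : (∫ z : (Fin p → ℝ) × (Fin q → ℝ),
        f1 z.1 * f2 z.2 * ∫ w, f1 w.1 * f2 w.2 * PhiP lam mu (z - w))
        = (∫ x, f1 x * ∫ x', f1 x' * phiBW lam (x - x')) *
          (∫ y, f2 y * ∫ y', f2 y' * phiBW mu (y - y')) := by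
      rw [← split_mul (fun x => f1 x * ∫ x', f1 x' * phiBW lam (x - x'))
        (fun y => f2 y * ∫ y', f2 y' * phiBW mu (y - y'))]
      congr 1; funext z
      rw [hinner z]
      show f1 z.1 * f2 z.2 *
          ((∫ x', f1 x' * phiBW lam (z.1 - x')) * (∫ y', f2 y' * phiBW mu (z.2 - y')))
        = (f1 z.1 * ∫ x', f1 x' * phiBW lam (z.1 - x')) *
          (f2 z.2 * ∫ y', f2 y' * phiBW mu (z.2 - y'))
      ring
    rw [hstep]
    have e1 : (∫ x, ∫ x', gaussKernel lam x x' * (f1 x * f1 x'))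
        = ∫ x, f1 x * ∫ x', f1 x' * phiBW lam (x - x') := by
      congr 1; funext x
      rw [← MeasureTheory.integral_const_mul]
      congr 1; funext x'
      show phiBW lam (x - x') * (f1 x * f1 x') = f1 x * (f1 x' * phiBW lam (x - x'))
      ring
    have e2 : (∫ y, ∫ y', gaussKernel mu y y' * (f2 y * f2 y'))
        = ∫ y, f2 y * ∫ y', f2 y' * phiBW mu (y - y') := by
      congr 1; funext y
      rw [← MeasureTheory.integral_const_mul]
      congr 1; funext y'
      show phiBW mu (y - y') * (f2 y * f2 y') = f2 y * (f2 y' * phiBW mu (y - y'))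
      ring
    rw [e1, e2]
  -- bilinearity expansion
  have hswap : (∫ zw, (f1 zw.1.1 * f2 zw.1.2) * f zw.2 * PhiP lam mu (zw.1 - zw.2)
      ∂((volume : Measure ((Fin p → ℝ) × (Fin q → ℝ))).prod volume))
      = ∫ zw, f zw.1 * (f1 zw.2.1 * f2 zw.2.2) * PhiP lam mu (zw.1 - zw.2)
      ∂((volume : Measure ((Fin p → ℝ) × (Fin q → ℝ))).prod volume) :=
    key_swap (fun z => f1 z.1 * f2 z.2) f
  have hexpand : (∫ zw, (f zw.1 - f1 zw.1.1 * f2 zw.1.2) * (f zw.2 - f1 zw.2.1 * f2 zw.2.2) *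
        PhiP lam mu (zw.1 - zw.2)
      ∂((volume : Measure ((Fin p → ℝ) × (Fin q → ℝ))).prod volume))
      = (∫ zw, f zw.1 * f zw.2 * PhiP lam mu (zw.1 - zw.2)
          ∂((volume : Measure ((Fin p → ℝ) × (Fin q → ℝ))).prod volume))
        + (∫ zw, (f1 zw.1.1 * f2 zw.1.2) * (f1 zw.2.1 * f2 zw.2.2) *
            PhiP lam mu (zw.1 - zw.2)
          ∂((volume : Measure ((Fin p → ℝ) × (Fin q → ℝ))).prod volume))
        - 2 * ∫ zw, f zw.1 * (f1 zw.2.1 * f2 zw.2.2) * PhiP lam mu (zw.1 - zw.2)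
          ∂((volume : Measure ((Fin p → ℝ) × (Fin q → ℝ))).prod volume) := by
    have hpt : (fun zw : ((Fin p → ℝ) × (Fin q → ℝ)) × (Fin p → ℝ) × (Fin q → ℝ) =>
        (f zw.1 - f1 zw.1.1 * f2 zw.1.2) * (f zw.2 - f1 zw.2.1 * f2 zw.2.2) *
          PhiP lam mu (zw.1 - zw.2))
        = fun zw =>
          (f zw.1 * f zw.2 * PhiP lam mu (zw.1 - zw.2)
            - f zw.1 * (f1 zw.2.1 * f2 zw.2.2) * PhiP lam mu (zw.1 - zw.2))
          - ((f1 zw.1.1 * f2 zw.1.2) * f zw.2 * PhiP lam mu (zw.1 - zw.2)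
            - (f1 zw.1.1 * f2 zw.1.2) * (f1 zw.2.1 * f2 zw.2.2) * PhiP lam mu (zw.1 - zw.2)) := by
      funext zw; ring
    have hsub1 : Integrable (fun zw : ((Fin p → ℝ) × (Fin q → ℝ)) × (Fin p → ℝ) × (Fin q → ℝ) =>
        f zw.1 * f zw.2 * PhiP lam mu (zw.1 - zw.2)
          - f zw.1 * (f1 zw.2.1 * f2 zw.2.2) * PhiP lam mu (zw.1 - zw.2))
        ((volume : Measure ((Fin p → ℝ) × (Fin q → ℝ))).prod volume) := hIff.sub hIfu
    have hsub2 : Integrable (fun zw : ((Fin p → ℝ) × (Fin q → ℝ)) × (Fin p → ℝ) × (Fin q → ℝ) =>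
        (f1 zw.1.1 * f2 zw.1.2) * f zw.2 * PhiP lam mu (zw.1 - zw.2)
          - (f1 zw.1.1 * f2 zw.1.2) * (f1 zw.2.1 * f2 zw.2.2) * PhiP lam mu (zw.1 - zw.2))
        ((volume : Measure ((Fin p → ℝ) × (Fin q → ℝ))).prod volume) := hIuf.sub hIuu
    rw [hpt, MeasureTheory.integral_sub hsub1 hsub2,
      MeasureTheory.integral_sub hIff hIfu, MeasureTheory.integral_sub hIuf hIuu, hswap]
    ring
  -- Goal 1
  set g : (Fin p → ℝ) × (Fin q → ℝ) → ℝ :=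
    convPair p q (fun w => f w - f1 w.1 * f2 w.2) lam mu with hgdef
  have hgeq : ∀ z, g z = ∫ w, (f w - f1 w.1 * f2 w.2) * PhiP lam mu (z - w) := fun z => rfl
  have hgoal1 : HSICpop p q lam mu f f1 f2 =
      ∫ z, (f z - f1 z.1 * f2 z.2) * g z := by
    have hkey := key_eq hlam hmu hpm hpm hpi hpB
    unfold HSICpop
    rw [← hJff, ← hJuu, ← hJfu, ← hexpand, hkey]
    rfl
  refine ⟨hgoal1, ?_⟩
  -- Goal 2
  have hB0 : (0:ℝ) ≤ M + M * M := by nlinarith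
  have hgm : Measurable g := by
    have hFm2 : Measurable (fun zw : ((Fin p → ℝ) × (Fin q → ℝ)) × (Fin p → ℝ) × (Fin q → ℝ) =>
        (f zw.2 - f1 zw.2.1 * f2 zw.2.2) * PhiP lam mu (zw.1 - zw.2)) :=
      (hpm.comp measurable_snd).mul
        ((PhiP_cont lam mu).measurable.comp (measurable_fst.sub measurable_snd))
    exact hFm2.stronglyMeasurable.integral_prod_right'.measurable
  have hnuI : Integrable (fun zw : ((Fin p → ℝ) × (Fin q → ℝ)) × (Fin p → ℝ) × (Fin q → ℝ) =>
      (1:ℝ) * |f zw.2 - f1 zw.2.1 * f2 zw.2.2| * PhiP lam mu (zw.1 - zw.2))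
      ((volume : Measure ((Fin p → ℝ) × (Fin q → ℝ))).prod volume) :=
    key_int hlam hmu measurable_const hpm.abs hpi.abs (fun _ => le_of_eq abs_one)
  have hnu : Integrable (fun z : (Fin p → ℝ) × (Fin q → ℝ) =>
      ∫ w, (1:ℝ) * |f w - f1 w.1 * f2 w.2| * PhiP lam mu (z - w)) volume :=
    hnuI.integral_prod_left
  have hnu_nn : ∀ z : (Fin p → ℝ) × (Fin q → ℝ),
      0 ≤ ∫ w, (1:ℝ) * |f w - f1 w.1 * f2 w.2| * PhiP lam mu (z - w) := fun z =>
    integral_nonneg fun w => mul_nonneg (mul_nonneg zero_le_one (abs_nonneg _))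
      (PhiP_nonneg lam mu hlam hmu _)
  have hgabs : ∀ z, |g z| ≤ ∫ w, (1:ℝ) * |f w - f1 w.1 * f2 w.2| * PhiP lam mu (z - w) := by
    intro z
    rw [hgeq]
    calc |∫ w, (f w - f1 w.1 * f2 w.2) * PhiP lam mu (z - w)|
        ≤ ∫ w, |(f w - f1 w.1 * f2 w.2) * PhiP lam mu (z - w)| :=
          by
            simpa only [Real.norm_eq_abs] using norm_integral_le_integral_norm (μ := volume)
              (fun w => (f w - f1 w.1 * f2 w.2) * PhiP lam mu (z - w))
      _ = ∫ w, (1:ℝ) * |f w - f1 w.1 * f2 w.2| * PhiP lam mu (z - w) := by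
          congr 1; funext w
          rw [abs_mul, abs_of_nonneg (PhiP_nonneg lam mu hlam hmu _), one_mul]
  have hslice : ∀ z : (Fin p → ℝ) × (Fin q → ℝ), Integrable
      (fun w => (1:ℝ) * |f w - f1 w.1 * f2 w.2| * PhiP lam mu (z - w)) volume := by
    intro z
    have hdom : Integrable (fun w : (Fin p → ℝ) × (Fin q → ℝ) =>
        (M + M * M) * PhiP lam mu (z - w)) volume :=
      (PhiP_int_shift' lam mu hlam hmu z).const_mul _
    refine hdom.mono ?_ (Filter.Eventually.of_forall fun w => ?_)
    · exact ((measurable_const.mul hpm.abs).mul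
        ((PhiP_cont lam mu).measurable.comp (measurable_const.sub measurable_id))
        ).aestronglyMeasurable
    · rw [Real.norm_eq_abs, Real.norm_eq_abs, one_mul,
        abs_of_nonneg (mul_nonneg (abs_nonneg _) (PhiP_nonneg lam mu hlam hmu _)),
        abs_of_nonneg (mul_nonneg hB0 (PhiP_nonneg lam mu hlam hmu _))]
      exact mul_le_mul_of_nonneg_right (hpB w) (PhiP_nonneg lam mu hlam hmu _)
  have hPhiShiftInt : ∀ z : (Fin p → ℝ) × (Fin q → ℝ),
      ∫ w, PhiP lam mu (z - w) = 1 := fun z => PhiP_integral_shift' lam mu hlam hmu z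
  have hgB : ∀ z, |g z| ≤ M + M * M := by
    intro z
    refine (hgabs z).trans ?_
    have h1 : Integrable (fun w : (Fin p → ℝ) × (Fin q → ℝ) =>
        PhiP lam mu (z - w)) volume := PhiP_int_shift' lam mu hlam hmu z
    calc ∫ w, (1:ℝ) * |f w - f1 w.1 * f2 w.2| * PhiP lam mu (z - w)
        ≤ ∫ w, (M + M * M) * PhiP lam mu (z - w) := by
          refine integral_mono (hslice z) (h1.const_mul _) fun w => ?_
          rw [one_mul]
          exact mul_le_mul_of_nonneg_right (hpB w) (PhiP_nonneg lam mu hlam hmu _)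
      _ = M + M * M := by rw [MeasureTheory.integral_const_mul, hPhiShiftInt z, mul_one]
  have hg2i : Integrable (fun z => g z ^ 2) volume := by
    refine ((hnu.const_mul (M + M * M)).mono
      ((hgm.pow_const 2).aestronglyMeasurable) (Filter.Eventually.of_forall fun z => ?_))
    rw [Real.norm_eq_abs, Real.norm_eq_abs, abs_of_nonneg (sq_nonneg _),
      abs_of_nonneg (mul_nonneg hB0 (hnu_nn z))]
    calc g z ^ 2 = |g z| * |g z| := by rw [← abs_mul, ← sq, abs_of_nonneg (sq_nonneg _)]
      _ ≤ (M + M * M) * ∫ w, (1:ℝ) * |f w - f1 w.1 * f2 w.2| * PhiP lam mu (z - w) :=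
          mul_le_mul (hgB z) (hgabs z) (abs_nonneg _) hB0
  have hpgi : Integrable (fun z => (f z - f1 z.1 * f2 z.2) * g z) volume := by
    refine ((hpi.abs.const_mul (M + M * M)).mono
      ((hpm.mul hgm).aestronglyMeasurable) (Filter.Eventually.of_forall fun z => ?_))
    rw [Real.norm_eq_abs, Real.norm_eq_abs, abs_mul,
      abs_of_nonneg (mul_nonneg hB0 (abs_nonneg _))]
    calc |f z - f1 z.1 * f2 z.2| * |g z|
        ≤ |f z - f1 z.1 * f2 z.2| * (M + M * M) :=
          mul_le_mul_of_nonneg_left (hgB z) (abs_nonneg _)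
      _ = (M + M * M) * |f z - f1 z.1 * f2 z.2| := by ring
  have hsq : (fun z : (Fin p → ℝ) × (Fin q → ℝ) =>
      ((f z - f1 z.1 * f2 z.2) - g z) ^ 2)
      = fun z => ((f z - f1 z.1 * f2 z.2) ^ 2
          - 2 * ((f z - f1 z.1 * f2 z.2) * g z)) + g z ^ 2 := by
    funext z; ring
  have hs1 : Integrable (fun z : (Fin p → ℝ) × (Fin q → ℝ) =>
      (f z - f1 z.1 * f2 z.2) ^ 2 - 2 * ((f z - f1 z.1 * f2 z.2) * g z)) volume :=
    hpsiL2.sub (hpgi.const_mul 2)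
  rw [hgoal1, hsq, MeasureTheory.integral_add hs1 hg2i,
    MeasureTheory.integral_sub hpsiL2 (hpgi.const_mul 2), MeasureTheory.integral_const_mul]
  ring
end
end
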